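/- For the breadth-first delegation rule: if voter k's selected minimal chain is C_k = ⟨k, …, f, j, …, l⟩ passing through j, and j's selected minimal chain is C_j = ⟨j, …, e, g, …, i⟩ with i ≠ l, where e also occurs in the segment ⟨k, …, f⟩ of C_k, then the chain C'_k = ⟨k, …, e, g, …, i⟩ is a valid delegation chain for k that is strictly shorter than C_k, contradicting minimality; hence no such configuration exists. -/

import Mathlib

/-- A delegation graph: voters are partitioned into casting, delegating and
abstaining (neither) voters; `weight a b = some x` iff delegating voter `a`
ranks `b` at position `x`. -/
structure DelGraph (V : Type) where
  cast : V → Prop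
  deleg : V → Prop
  weight : V → V → Option ℕ

namespace DelGraph

variable {V : Type}

/-- Edge of the delegation graph. -/
def Edge (G : DelGraph V) (a b : V) : Prop := G.weight a b ≠ none

/-- The weight sequence of a chain. -/
def weights (G : DelGraph V) (c : List V) : List ℕ :=
  (c.zip c.tail).map fun p => (G.weight p.1 p.2).getD 0

/-- A delegation chain for `i` : a repetition-free directed path starting at
the delegating voter `i` and ending at a casting voter. -/
def IsChain (G : DelGraph V) (i : V) (c : List V) : Prop :=
  c.head? = some i ∧ G.deleg i ∧ c.Nodup ∧ List.Chain' G.Edge c ∧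
    ∃ j, c.getLast? = some j ∧ G.cast j

/-- Lexicographic (strict) order on weight sequences. -/
def LexLt (u v : List ℕ) : Prop := List.Lex (· < ·) u v

/-- Depth-first delegation: the selected chain has lexicographically minimal
weight sequence. -/
def DFSelect (G : DelGraph V) (i : V) (c : List V) : Prop :=
  G.IsChain i c ∧ ∀ c', G.IsChain i c' → ¬ LexLt (G.weights c') (G.weights c)

/-- `j` is the guru assigned to `i` by the depth-first delegation rule. -/
def DFGuru (G : DelGraph V) (i j : V) : Prop :=
  ∃ c, G.DFSelect i c ∧ c.getLast? = some j

/-- Breadth-first comparison: shorter length first, lexicographically smaller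
weight sequence among equal-length chains. -/
def BFLt (G : DelGraph V) (c' c : List V) : Prop :=
  c'.length < c.length ∨
    (c'.length = c.length ∧ LexLt (G.weights c') (G.weights c))

/-- Breadth-first delegation: the selected chain is minimal for `BFLt`. -/
def BFSelect (G : DelGraph V) (i : V) (c : List V) : Prop :=
  G.IsChain i c ∧ ∀ c', G.IsChain i c' → ¬ G.BFLt c' c

/-- `j` is the guru assigned to `i` by the breadth-first delegation rule. -/
def BFGuru (G : DelGraph V) (i j : V) : Prop :=
  ∃ c, G.BFSelect i c ∧ c.getLast? = some j

/-- The delegation graph has no directed cycle. -/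
def Acyclic (G : DelGraph V) : Prop :=
  ∀ v, ¬ Relation.TransGen G.Edge v v

/-- `G'` is obtained from `G` when the previously abstaining voter `j` joins
the delegating electorate (adding `j`'s outgoing edges). -/
def Joins (G G' : DelGraph V) (j : V) : Prop :=
  ¬ G.deleg j ∧ ¬ G.cast j ∧ (∀ b, G.weight j b = none) ∧
    (∀ v, G'.cast v ↔ G.cast v) ∧ (∀ v, G'.deleg v ↔ G.deleg v ∨ v = j) ∧
    (∀ a b, a ≠ j → G'.weight a b = G.weight a b)

/-- `G'` is obtained from `G` by removing the delegating voter `j` (she now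
abstains): node `j` and all incident edges are deleted. -/
def Removes (G G' : DelGraph V) (j : V) : Prop :=
  (∀ v, G'.cast v ↔ G.cast v) ∧ (∀ v, G'.deleg v ↔ G.deleg v ∧ v ≠ j) ∧
    (∀ a b, (a = j ∨ b = j) → G'.weight a b = none) ∧
    (∀ a b, a ≠ j → b ≠ j → G'.weight a b = G.weight a b)

end DelGraph

theorem dedup_chain {V : Type} (R : V → V → Prop) :
    ∀ (n : ℕ) (c : List V), c.length ≤ n → List.Chain' R c →
      ∃ c', c'.Nodup ∧ List.Chain' R c' ∧ c'.head? = c.head? ∧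
        c'.getLast? = c.getLast? ∧ c'.length ≤ c.length ∧ ∀ v ∈ c', v ∈ c := by
  intro n
  induction n with
  | zero =>
    intro c hc _
    have : c = [] := by
      cases c with
      | nil => rfl
      | cons a b => simp at hc
    subst this
    exact ⟨[], by simp [List.Chain']⟩
  | succ n ih =>
    intro c hlen hch
    match c with
    | [] => exact ⟨[], by simp [List.Chain']⟩
    | x :: rest =>
      by_cases hx : x ∈ rest
      · obtain ⟨S, T, hST⟩ := List.append_of_mem hx
        have hdec : x :: rest = (x :: S) ++ (x :: T) := by simp [hST]
        have hsub : (x :: T).length ≤ n := by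
          simp only [hST, List.length_cons, List.length_append] at hlen ⊢
          omega
        have hchT : List.Chain' R (x :: T) := by
          rw [hdec] at hch
          exact (List.isChain_append.mp hch).2.1
        obtain ⟨c', h1, h2, h3, h4, h5, h6⟩ := ih (x :: T) hsub hchT
        refine ⟨c', h1, h2, ?_, ?_, ?_, ?_⟩
        · rw [h3]; rfl
        · rw [h4, hdec, List.getLast?_append]
          have : (x :: T).getLast? ≠ none := by simp
          cases hxt : (x :: T).getLast? with
          | none => exact absurd hxt this
          | some a => rfl
        · simp only [hST, List.length_cons, List.length_append] at h5 ⊢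
          omega
        · intro v hv
          have := h6 v hv
          rw [hdec]
          simp at this ⊢
          tauto
      · have hlen' : rest.length ≤ n := by simp at hlen; omega
        obtain ⟨c', h1, h2, h3, h4, h5, h6⟩ := ih rest hlen' hch.tail
        refine ⟨x :: c', ?_, ?_, rfl, ?_, ?_, ?_⟩
        · exact List.nodup_cons.mpr ⟨fun h => hx (h6 x h), h1⟩
        · refine List.isChain_cons.mpr ⟨?_, h2⟩
          intro y hy
          rw [h3] at hy
          exact (List.isChain_cons.mp hch).1 y hy
        · cases hr : rest with
          | nil =>
            subst hr
            have : c' = [] := by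
              have := h5; simpa using List.length_eq_zero_iff.mp (Nat.le_zero.mp this)
            simp [this]
          | cons r rs =>
            subst hr
            have hcne : c' ≠ [] := by
              intro h
              rw [h] at h4
              have : (r :: rs).getLast? ≠ none := by simp
              exact this h4.symm
            have e1 : (x :: c').getLast? = c'.getLast? := by
              have : (x :: c') = [x] ++ c' := rfl
              rw [this, List.getLast?_append]
              cases hc2 : c'.getLast? with
              | none => exact absurd (List.getLast?_eq_none_iff.mp hc2) hcne
              | some a => rfl
            have e2 : (x :: r :: rs).getLast? = (r :: rs).getLast? := by
              have : (x :: r :: rs) = [x] ++ (r :: rs) := rfl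
              rw [this, List.getLast?_append]
              cases hc2 : (r :: rs).getLast? with
              | none => exact absurd (List.getLast?_eq_none_iff.mp hc2) (by simp)
              | some a => rfl
            rw [e1, e2, h4]
        · simp; omega
        · intro v hv
          simp at hv ⊢
          rcases hv with h | h
          · exact Or.inl h
          · exact Or.inr (h6 v h)


/-- for the breadth-first delegation rule, the following
configuration is impossible: `k`'s selected chain is
`Ck = ⟨k,…,f⟩ ++ j :: K2` ending at `l`, `j`'s selected chain is
`Cj = A ++ B` with `A = ⟨j,…,e⟩`, `B = ⟨g,…,i⟩`, `i ≠ l`, and `e` also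
occurring in the segment before `j` in `Ck` — otherwise
`⟨k,…,e,g,…,i⟩` would be a valid strictly shorter chain for `k`,
contradicting minimality. -/
theorem stmt10 {V : Type} (G : DelGraph V) (k j e l i : V)
    (Ck Cj K1 K2 A B : List V)
    (hCk : G.BFSelect k Ck) (hCj : G.BFSelect j Cj)
    (hCkdec : Ck = K1 ++ j :: K2) (he : e ∈ K1)
    (hCjdec : Cj = A ++ B) (hAe : A.getLast? = some e) (hB : B ≠ [])
    (hCkl : Ck.getLast? = some l) (hCji : Cj.getLast? = some i)
    (hil : i ≠ l) :
    False := by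
  obtain ⟨⟨hk_head, hk_del, hk_nd, hk_ch, l', hl', hl'cast⟩, hmink⟩ := hCk
  obtain ⟨⟨hj_head, hj_del, hj_nd, hj_ch, i', hi', hi'cast⟩, hminj⟩ := hCj
  have hcastl : G.cast l := by rw [hCkl] at hl'; injection hl' with h; rw [h]; exact hl'cast
  have hcasti : G.cast i := by rw [hCji] at hi'; injection hi' with h; rw [h]; exact hi'cast
  have hAne : A ≠ [] := by intro h; rw [h] at hAe; simp at hAe
  -- j ∉ K1, hence e ≠ j
  have hk_nd' : (K1 ++ j :: K2).Nodup := by rwa [hCkdec] at hk_nd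
  have hjK1 : j ∉ K1 := by
    intro h
    exact (List.nodup_append'.mp hk_nd').2.2 h List.mem_cons_self
  have hej : e ≠ j := fun h => hjK1 (h ▸ he)
  -- A starts with j
  have hAhead : A.head? = some j := by
    rw [hCjdec, List.head?_append] at hj_head
    cases hA0 : A.head? with
    | none => exact absurd (List.head?_eq_none_iff.mp hA0) hAne
    | some a0 => rw [hA0] at hj_head; simpa using hj_head
  -- |A| ≥ 2
  have hA2 : 2 ≤ A.length := by
    match A, hAne, hAhead, hAe with
    | [a0], _, hh, hl =>
      simp at hh hl
      exact absurd (hl.symm.trans hh) hej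
    | a0 :: a1 :: rest, _, _, _ => simp
  -- j :: K2 is a chain for j
  have hk_ch' : List.Chain' G.Edge (K1 ++ j :: K2) := by rwa [hCkdec] at hk_ch
  have hjK2last : (j :: K2).getLast? = some l := by
    rw [hCkdec, List.getLast?_append] at hCkl
    cases hb : (j :: K2).getLast? with
    | none => simp at hb
    | some b => rw [hb] at hCkl; simpa using hCkl
  have hchain_jK2 : G.IsChain j (j :: K2) := by
    refine ⟨rfl, hj_del, ?_, (List.isChain_append.mp hk_ch').2.1, l, hjK2last, hcastl⟩
    exact (List.sublist_append_right K1 (j :: K2)).nodup hk_nd'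
  -- minimality of Cj : |Cj| ≤ |K2| + 1
  have hCjlen : Cj.length ≤ K2.length + 1 := by
    by_contra h
    exact hminj (j :: K2) hchain_jK2 (Or.inl (by simp; omega))
  -- decompose K1 around e
  obtain ⟨P1, P2, hK1⟩ := List.append_of_mem he
  set c0 : List V := (P1 ++ [e]) ++ B with hc0
  -- head of c0 is k
  have hh : c0.head? = some k := by
    rw [hCkdec, hK1] at hk_head
    cases P1 with
    | nil => simpa [hc0] using hk_head
    | cons p ps => simpa [hc0] using hk_head
  -- chain property of c0
  have hch0 : List.Chain' G.Edge c0 := by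
    rw [hCkdec, hK1] at hk_ch
    have h1 : List.Chain' G.Edge (P1 ++ e :: P2) := (List.isChain_append.mp hk_ch).1
    have h1' : List.Chain' G.Edge ((P1 ++ [e]) ++ P2) := by simpa using h1
    have hP : List.Chain' G.Edge (P1 ++ [e]) := (List.isChain_append.mp h1').1
    rw [hCjdec] at hj_ch
    have hsp := List.isChain_append.mp hj_ch
    refine List.isChain_append.mpr ⟨hP, hsp.2.1, ?_⟩
    intro x hx y hy
    rw [List.getLast?_concat] at hx
    simp at hx
    subst hx
    exact hsp.2.2 e (by rw [hAe]; rfl) y hy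
  -- last of c0 is i
  have hBlast : B.getLast? = some i := by
    rw [hCjdec, List.getLast?_append] at hCji
    cases hb : B.getLast? with
    | none => exact absurd (List.getLast?_eq_none_iff.mp hb) hB
    | some b => rw [hb] at hCji; simpa using hCji
  have hlast0 : c0.getLast? = some i := by
    rw [hc0, List.getLast?_append, hBlast]; rfl
  -- length comparison
  have hlt : c0.length < Ck.length := by
    have e1 : Cj.length = A.length + B.length := by rw [hCjdec]; simp
    have e2 : Ck.length = P1.length + 1 + P2.length + 1 + K2.length := by
      rw [hCkdec, hK1]; simp; omega
    have e3 : c0.length = P1.length + 1 + B.length := by rw [hc0]; simp only [List.length_append, List.length_cons, List.length_nil]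
    omega
  -- dedup c0 into a genuine chain
  obtain ⟨c', h1, h2, h3, h4, h5, _⟩ :=
    dedup_chain G.Edge c0.length c0 le_rfl hch0
  have hIs : G.IsChain k c' := by
    refine ⟨by rw [h3]; exact hh, hk_del, h1, h2, i, by rw [h4]; exact hlast0, hcasti⟩
  exact hmink c' hIs (Or.inl (lt_of_le_of_lt h5 hlt))
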